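/- Smallness of the test-function contribution (estimate (3.6)): Let g satisfy condition (1.3) with constants 1 < p_g ≤ q_g, let 0 < s < 1, n ≥ 1, x̃ ∈ ℝⁿ, 0 < Λ, and let K:ℝⁿ×ℝⁿ→(0,∞] satisfy K(x,y) ≤ Λ|x−y|^{−n}. Let β > s + s/p_g (equivalently β > sp/(p−1) with p = p_g+1). Then for all 0 < ε < 1 and 0 < r ≤ 1: ∫_{B_r(x̃)} g( ε|y−x̃|^{β}/|y−x̃|^{s} ) K(x̃,y) |y−x̃|^{−s} dy ≤ (g(1) Λ q_g / p_g) · ε · r^{(β−s)p_g − s} / ((β−s)p_g − s) · ω, where ω is the surface measure of the unit sphere in ℝⁿ; in particular this integral tends to 0 as ε → 0. -/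

import Mathlib

open Set Filter Topology Metric MeasureTheory

noncomputable section

abbrev Eucl (n : ℕ) : Type := EuclideanSpace ℝ (Fin n)

lemma aux_ball_rpow (n : ℕ) (hn : 1 ≤ n) (c : ℝ) (hc : (0:ℝ) < c + n) (r : ℝ) (hr : 0 < r) :
    IntegrableOn (fun y : Eucl n => ‖y‖ ^ c) (ball (0 : Eucl n) r) volume ∧
    ∫ y in ball (0 : Eucl n) r, ‖y‖ ^ c =
      ((n : ℝ) * (volume (ball (0 : Eucl n) 1)).toReal) * (r ^ (c + n) / (c + n)) := by
  haveI : Nonempty (Fin n) := ⟨⟨0, hn⟩⟩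
  haveI : Nontrivial (Eucl n) := inferInstance
  have hdim : Module.finrank ℝ (Eucl n) = n := finrank_euclideanSpace_fin
  set f : ℝ → ℝ := (Ioo (0:ℝ) r).indicator (fun y => y ^ c) with hfdef
  -- a.e. equality between `f ‖·‖` and the indicator of the ball
  have hae : (fun x : Eucl n => f ‖x‖) =ᵐ[volume]
      (ball (0:Eucl n) r).indicator (fun x => ‖x‖ ^ c) := by
    filter_upwards [compl_mem_ae_iff.2 (measure_singleton (0:Eucl n))] with x hx
    have hx0 : 0 < ‖x‖ := norm_pos_iff.2 hx
    by_cases hxr : ‖x‖ < r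
    · simp [hfdef, Set.indicator_apply, mem_Ioo, mem_ball_zero_iff, hx0, hxr]
    · simp [hfdef, Set.indicator_apply, mem_Ioo, mem_ball_zero_iff, hx0, hxr]
  -- the 1-dimensional integrand
  have hexp : ((n - 1 : ℕ) : ℝ) + c = c + n - 1 := by
    have : ((n - 1 : ℕ) : ℝ) = (n : ℝ) - 1 := by
      push_cast [Nat.cast_sub hn]; ring
    rw [this]; ring
  -- value of the inner integral
  have hinner : ∫ y in Ioi (0:ℝ), y ^ (n - 1) • f y = r ^ (c + n) / (c + n) := by
    have h1 : ∀ y : ℝ, y ^ (n - 1) • f y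
        = (Ioo (0:ℝ) r).indicator (fun y => y ^ (n-1) * y ^ c) y := by
      intro y
      simp only [hfdef, Set.indicator_apply, smul_eq_mul]
      split_ifs <;> simp
    simp only [h1]
    rw [integral_indicator measurableSet_Ioo, Measure.restrict_restrict measurableSet_Ioo,
      inter_eq_self_of_subset_left Ioo_subset_Ioi_self]
    have h2 : ∀ y ∈ Ioo (0:ℝ) r, y ^ (n-1) * y ^ c = y ^ (c + n - 1) := by
      intro y hy
      rw [← Real.rpow_natCast y (n-1), ← Real.rpow_add hy.1, hexp]
    rw [setIntegral_congr_fun measurableSet_Ioo h2, ← integral_Ioc_eq_integral_Ioo,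
      ← intervalIntegral.integral_of_le hr.le,
      integral_rpow (Or.inl (by linarith))]
    rw [Real.zero_rpow (by linarith), sub_add_cancel]
    ring_nf
  have hval : ∫ x : Eucl n, f ‖x‖
      = (n:ℝ) * (volume (ball (0:Eucl n) 1)).toReal * (r ^ (c + n) / (c + n)) := by
    rw [integral_fun_norm_addHaar volume f, hdim, hinner, nsmul_eq_mul, smul_eq_mul, measureReal_def]
    ring
  have hIf : Integrable (fun x : Eucl n => f ‖x‖) volume := by
    have hs : MeasurableSet ({(0:Eucl n)}ᶜ) := (measurableSet_singleton _).compl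
    have hemb : MeasurableEmbedding ((↑) : ({(0:Eucl n)}ᶜ : Set (Eucl n)) → Eucl n) :=
      MeasurableEmbedding.subtype_coe hs
    suffices h : Integrable (fun x : Eucl n => f ‖x‖) (volume.restrict ({(0:Eucl n)}ᶜ)) by
      rwa [MeasureTheory.restrict_compl_singleton] at h
    rw [← Subtype.range_coe (s := ({(0:Eucl n)}ᶜ : Set (Eucl n))), ← hemb.map_comap volume,
      hemb.integrable_map_iff]
    have hcomp : ((fun x : Eucl n => f ‖x‖) ∘ ((↑) : ({(0:Eucl n)}ᶜ : Set (Eucl n)) → Eucl n))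
        = (fun z : sphere (0:Eucl n) 1 × Ioi (0:ℝ) => f z.2)
            ∘ (homeomorphUnitSphereProd (Eucl n)) := by
      funext x; simp [Function.comp]
    rw [hcomp, (Measure.measurePreserving_homeomorphUnitSphereProd volume).integrable_comp_emb
      (Homeomorph.measurableEmbedding _)]
    have hf1 : ∀ m : ℕ, -1 < c + m → Integrable (fun y : (Ioi (0:ℝ)) => f y) (Measure.volumeIoiPow m) := by
      intro m hmc
      rw [Measure.volumeIoiPow, integrable_withDensity_iff
        ((measurable_subtype_coe.pow_const _).ennreal_ofReal)
        (ae_of_all _ fun y => ENNReal.ofReal_lt_top)]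
      have hemb2 : MeasurableEmbedding ((↑) : (Ioi (0:ℝ)) → ℝ) :=
        MeasurableEmbedding.subtype_coe measurableSet_Ioi
      have h3 : (fun y : (Ioi (0:ℝ)) => f y * (ENNReal.ofReal ((y:ℝ) ^ m)).toReal)
          = (fun y : ℝ => f y * (ENNReal.ofReal (y ^ m)).toReal) ∘ (↑) := rfl
      rw [h3, ← hemb2.integrable_map_iff, hemb2.map_comap, Subtype.range_coe]
      have h4 : (fun y : ℝ => f y * (ENNReal.ofReal (y ^ m)).toReal)
          = (Ioo (0:ℝ) r).indicator (fun y => y ^ c * y ^ m) := by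
        funext y
        simp only [hfdef, Set.indicator_apply]
        split_ifs with hy
        · rw [ENNReal.toReal_ofReal (pow_nonneg hy.1.le m)]
        · simp
      rw [h4]
      apply Integrable.integrableOn
      rw [integrable_indicator_iff measurableSet_Ioo]
      have hbase : IntegrableOn (fun y : ℝ => y ^ (c + m)) (Ioo (0:ℝ) r) := by
        apply IntegrableOn.mono_set _ Ioo_subset_Ioc_self
        exact (intervalIntegral.intervalIntegrable_rpow' hmc).1
      apply hbase.congr_fun ?_ measurableSet_Ioo
      intro y hy
      simp only []
      rw [Real.rpow_add hy.1, Real.rpow_natCast]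
    have hdim : Module.finrank ℝ (Eucl n) = n := finrank_euclideanSpace_fin
    have hmc : -1 < c + ((Module.finrank ℝ (Eucl n) - 1 : ℕ) : ℝ) := by
      rw [hdim]
      have : ((n - 1 : ℕ) : ℝ) = (n : ℝ) - 1 := by push_cast [Nat.cast_sub hn]; ring
      rw [this]; linarith
    simpa using (integrable_const (1:ℝ)).smul_prod (hf1 _ hmc)
  constructor
  · rw [← integrable_indicator_iff measurableSet_ball]
    exact hIf.congr hae
  · rw [← integral_indicator measurableSet_ball, ← integral_congr_ae hae, hval]

lemma aux_g_bound (g : ℝ → ℝ) (pg : ℝ)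
    (hdiff : ∀ t : ℝ, 0 < t → DifferentiableAt ℝ g t)
    (hlow : ∀ t : ℝ, 0 < t → pg * g t ≤ t * deriv g t) :
    ∀ t : ℝ, 0 < t → t ≤ 1 → g t ≤ g 1 * t ^ pg := by
  have hd : ∀ u : ℝ, u ∈ interior (Ioi (0:ℝ)) → HasDerivAt (fun u : ℝ => g u * u ^ (-pg))
      (deriv g u * u ^ (-pg) + g u * (-pg * u ^ (-pg - 1))) u := by
    intro u hu
    rw [interior_Ioi] at hu
    exact ((hdiff u hu).hasDerivAt).mul (Real.hasDerivAt_rpow_const (Or.inl hu.ne'))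
  have hmono : MonotoneOn (fun u : ℝ => g u * u ^ (-pg)) (Ioi (0:ℝ)) := by
    apply monotoneOn_of_deriv_nonneg (convex_Ioi 0)
    · intro u hu
      have hu' : u ∈ interior (Ioi (0:ℝ)) := by rwa [interior_Ioi]
      exact (hd u hu').differentiableAt.continuousAt.continuousWithinAt
    · intro u hu
      exact (hd u hu).differentiableAt.differentiableWithinAt
    · intro u hu
      rw [(hd u hu).deriv]
      rw [interior_Ioi] at hu
      have key : pg * g u ≤ u * deriv g u := hlow u hu
      have h1 : (0:ℝ) < u ^ (-pg - 1) := Real.rpow_pos_of_pos hu _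
      have h2 : u * u ^ (-pg - 1) = u ^ (-pg) := by
        rw [mul_comm, ← Real.rpow_add_one hu.ne']
        norm_num
      rw [← h2]
      have h3 : 0 ≤ (u * deriv g u - pg * g u) * u ^ (-pg - 1) :=
        mul_nonneg (by linarith) h1.le
      nlinarith
  intro t ht ht1
  have h := hmono (mem_Ioi.2 ht) (mem_Ioi.2 one_pos) ht1
  simp only [Real.one_rpow] at h
  -- h : g t * t ^ (-pg) ≤ g 1 * 1
  have hp : (0:ℝ) < t ^ pg := Real.rpow_pos_of_pos ht _
  have hneg : t ^ (-pg) = (t ^ pg)⁻¹ := by rw [Real.rpow_neg ht.le]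
  rw [hneg, mul_one, ← div_eq_mul_inv, div_le_iff₀ hp] at h
  exact h

/-- estimate (3.6): smallness of the test-function
contribution.  For `g` satisfying condition (1.3), a kernel bounded by
`Λ|x−y|^{−n}`, and `β > s + s/p_g` (equivalently `β > sp/(p−1)` with
`p = p_g + 1`), one has, for `0 < ε < 1` and `0 < r ≤ 1`,
`∫_{B_r(x̃)} g(ε|y−x̃|^β/|y−x̃|^s) K(x̃,y)|y−x̃|^{−s} dy ≤
 (g(1)Λq_g/p_g)·ε·r^{(β−s)p_g−s}/((β−s)p_g−s)·ω`, where `ω` is the surface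
measure of the unit sphere in `ℝⁿ` (i.e. `n·|B₁|`); in particular this
integral tends to `0` as `ε → 0`. -/
theorem test_function_smallness
    (n : ℕ) (hn : 1 ≤ n) (s : ℝ) (hs0 : 0 < s) (hs1 : s < 1)
    (g : ℝ → ℝ) (pg qg : ℝ) (hpg : 1 < pg) (hpq : pg ≤ qg)
    (hcont : ContinuousOn g (Ici 0)) (hmono : StrictMonoOn g (Ici 0))
    (hzero : g 0 = 0) (hinfty : Tendsto g atTop atTop)
    (hdiff : ∀ t : ℝ, 0 < t → DifferentiableAt ℝ g t)
    (hlow : ∀ t : ℝ, 0 < t → pg * g t ≤ t * deriv g t)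
    (hupp : ∀ t : ℝ, 0 < t → t * deriv g t ≤ qg * g t)
    (x' : Eucl n) (Lam : ℝ) (hLam : 0 < Lam)
    (K : Eucl n → Eucl n → ℝ) (hKpos : ∀ x y, 0 ≤ K x y)
    (hKupper : ∀ x y : Eucl n, x ≠ y → K x y ≤ Lam / ‖x - y‖ ^ n)
    (β : ℝ) (hβ : s + s / pg < β) :
    (∀ ε r : ℝ, 0 < ε → ε < 1 → 0 < r → r ≤ 1 →
      (∫ y in ball x' r,
          g (ε * ‖y - x'‖ ^ β / ‖y - x'‖ ^ s) * K x' y / ‖y - x'‖ ^ s) ≤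
        g 1 * Lam * qg / pg * ε * r ^ ((β - s) * pg - s) / ((β - s) * pg - s) *
          ((n : ℝ) * (volume (ball (0 : Eucl n) 1)).toReal)) ∧
    ∀ r : ℝ, 0 < r → r ≤ 1 →
      Tendsto (fun ε : ℝ =>
          ∫ y in ball x' r,
            g (ε * ‖y - x'‖ ^ β / ‖y - x'‖ ^ s) * K x' y / ‖y - x'‖ ^ s)
        (𝓝[>] 0) (𝓝 0) := by
  have hpg0 : (0:ℝ) < pg := lt_trans one_pos hpg
  have hβs : 0 < β - s := by
    have h1 : 0 < s / pg := div_pos hs0 hpg0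
    linarith
  have ha : 0 < (β - s) * pg - s := by
    have h1 : s / pg < β - s := by linarith
    have h2 : s < (β - s) * pg := by
      rw [div_lt_iff₀ hpg0] at h1
      linarith
    linarith
  have hg1 : 0 < g 1 := by
    have := hmono (mem_Ici.2 le_rfl) (mem_Ici.2 zero_le_one) one_pos
    rwa [hzero] at this
  have hgnn : ∀ t : ℝ, 0 ≤ t → 0 ≤ g t := by
    intro t ht
    rcases eq_or_lt_of_le ht with h | h
    · rw [← h, hzero]
    · have := hmono (mem_Ici.2 le_rfl) (mem_Ici.2 ht) h
      rw [hzero] at this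
      exact this.le
  have hgb := aux_g_bound g pg hdiff hlow
  set ω : ℝ := (n : ℝ) * (volume (ball (0 : Eucl n) 1)).toReal with hω
  have hωnn : 0 ≤ ω := by
    apply mul_nonneg (Nat.cast_nonneg n) ENNReal.toReal_nonneg
  -- nonnegativity of the integrand
  have hFnn : ∀ ε : ℝ, 0 < ε → ∀ y : Eucl n,
      0 ≤ g (ε * ‖y - x'‖ ^ β / ‖y - x'‖ ^ s) * K x' y / ‖y - x'‖ ^ s := by
    intro ε hε y
    apply div_nonneg _ (Real.rpow_nonneg (norm_nonneg _) _)
    apply mul_nonneg _ (hKpos x' y)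
    apply hgnn
    positivity
  -- main estimate
  have main : ∀ ε r : ℝ, 0 < ε → ε < 1 → 0 < r → r ≤ 1 →
      (∫ y in ball x' r,
          g (ε * ‖y - x'‖ ^ β / ‖y - x'‖ ^ s) * K x' y / ‖y - x'‖ ^ s) ≤
        g 1 * Lam * qg / pg * ε * r ^ ((β - s) * pg - s) / ((β - s) * pg - s) * ω := by
    intro ε r hε hε1 hr hr1
    set c : ℝ := (β - s) * pg - s - n with hc_def
    have hcn : c + (n:ℝ) = (β - s) * pg - s := by rw [hc_def]; ring
    have hc : (0:ℝ) < c + n := by rw [hcn]; exact ha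
    obtain ⟨hNint, hNval⟩ := aux_ball_rpow n hn c hc r hr
    -- transport to the ball centered at x'
    set N : Eucl n → ℝ := fun z => ‖z‖ ^ c with hN
    have h3 : (fun y : Eucl n => (ball (0:Eucl n) r).indicator N (y - x'))
        = (ball x' r).indicator (fun y : Eucl n => ‖y - x'‖ ^ c) := by
      funext y
      by_cases hy : y ∈ ball x' r
      · have hy' : y - x' ∈ ball (0:Eucl n) r := by
          rwa [mem_ball_zero_iff, ← mem_ball_iff_norm]
        rw [Set.indicator_of_mem hy', Set.indicator_of_mem hy]
      · have hy' : y - x' ∉ ball (0:Eucl n) r := by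
          rwa [mem_ball_zero_iff, ← mem_ball_iff_norm]
        rw [Set.indicator_of_notMem hy', Set.indicator_of_notMem hy]
    have hMint : IntegrableOn (fun y : Eucl n => ‖y - x'‖ ^ c) (ball x' r) := by
      rw [← integrable_indicator_iff measurableSet_ball, ← h3]
      exact ((integrable_indicator_iff measurableSet_ball).2 hNint).comp_sub_right x'
    have hMval : ∫ y in ball x' r, ‖y - x'‖ ^ c = ω * (r ^ ((β - s) * pg - s) / ((β - s) * pg - s)) := by
      rw [← integral_indicator measurableSet_ball, ← h3,
        integral_sub_right_eq_self ((ball (0:Eucl n) r).indicator N) x',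
        integral_indicator measurableSet_ball, hNval, hcn]
    -- pointwise bound
    have hpt : ∀ y ∈ ball x' r,
        g (ε * ‖y - x'‖ ^ β / ‖y - x'‖ ^ s) * K x' y / ‖y - x'‖ ^ s
          ≤ g 1 * Lam * ε * ‖y - x'‖ ^ c := by
      intro y hy
      by_cases hyx : y = x'
      · subst hyx
        simp only [sub_self, norm_zero, Real.zero_rpow hs0.ne', div_zero]
        have : (0:ℝ) ≤ (0:ℝ) ^ c := Real.rpow_nonneg le_rfl c
        have h0 : (0:ℝ) ≤ g 1 * Lam * ε := by positivity
        exact mul_nonneg h0 this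
      · set ρ : ℝ := ‖y - x'‖ with hρdef
        have hρ : 0 < ρ := by
          rw [hρdef, norm_pos_iff]
          exact sub_ne_zero.2 hyx
        have hρ1 : ρ < 1 := by
          rw [mem_ball_iff_norm] at hy
          exact lt_of_lt_of_le hy hr1
        have harg : ε * ρ ^ β / ρ ^ s = ε * ρ ^ (β - s) := by
          rw [mul_div_assoc, ← Real.rpow_sub hρ]
        have ht0 : 0 < ε * ρ ^ (β - s) := by positivity
        have ht1 : ε * ρ ^ (β - s) ≤ 1 := by
          have h1 : ρ ^ (β - s) ≤ 1 := Real.rpow_le_one hρ.le hρ1.le hβs.le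
          nlinarith
        have hKb : K x' y ≤ Lam / ρ ^ n := by
          have := hKupper x' y (Ne.symm hyx)
          rwa [norm_sub_rev x' y] at this
        have hεp : ε ^ pg ≤ ε := by
          calc ε ^ pg ≤ ε ^ (1:ℝ) := Real.rpow_le_rpow_of_exponent_ge hε hε1.le hpg.le
          _ = ε := Real.rpow_one ε
        have hid : ρ ^ ((β - s) * pg) / ρ ^ n / ρ ^ s = ρ ^ c := by
          rw [← Real.rpow_natCast ρ n, ← Real.rpow_sub hρ, ← Real.rpow_sub hρ]
          congr 1
          rw [hc_def]; ring
        calc g (ε * ρ ^ β / ρ ^ s) * K x' y / ρ ^ s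
            ≤ (g 1 * (ε * ρ ^ (β - s)) ^ pg) * (Lam / ρ ^ n) / ρ ^ s := by
              apply div_le_div_of_nonneg_right _ (Real.rpow_pos_of_pos hρ s).le
              rw [harg]
              exact mul_le_mul (hgb _ ht0 ht1) hKb (hKpos x' y)
                (mul_nonneg hg1.le (Real.rpow_nonneg ht0.le pg))
          _ = (g 1 * (ε ^ pg * ρ ^ ((β - s) * pg))) * (Lam / ρ ^ n) / ρ ^ s := by
              rw [Real.mul_rpow hε.le (Real.rpow_nonneg hρ.le _), ← Real.rpow_natCast ρ n]
              rw [← Real.rpow_mul hρ.le]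
          _ ≤ (g 1 * (ε * ρ ^ ((β - s) * pg))) * (Lam / ρ ^ n) / ρ ^ s := by
              apply div_le_div_of_nonneg_right _ (Real.rpow_pos_of_pos hρ s).le
              apply mul_le_mul_of_nonneg_right _ (div_nonneg hLam.le (by positivity))
              apply mul_le_mul_of_nonneg_left _ hg1.le
              exact mul_le_mul_of_nonneg_right hεp (Real.rpow_nonneg hρ.le _)
          _ = g 1 * Lam * ε * ρ ^ c := by
              rw [← hid]; ring
    -- put everything together
    have hint : (∫ y in ball x' r,
        g (ε * ‖y - x'‖ ^ β / ‖y - x'‖ ^ s) * K x' y / ‖y - x'‖ ^ s)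
          ≤ ∫ y in ball x' r, g 1 * Lam * ε * ‖y - x'‖ ^ c := by
      apply integral_mono_of_nonneg
      · exact Eventually.of_forall (fun y => hFnn ε hε y)
      · exact (hMint.const_mul (g 1 * Lam * ε))
      · filter_upwards [ae_restrict_mem measurableSet_ball] with y hy
        exact hpt y hy
    have hval2 : ∫ y in ball x' r, g 1 * Lam * ε * ‖y - x'‖ ^ c
        = g 1 * Lam * ε * (ω * (r ^ ((β - s) * pg - s) / ((β - s) * pg - s))) := by
      rw [integral_const_mul, hMval]
    have hX : 0 ≤ ω * (r ^ ((β - s) * pg - s) / ((β - s) * pg - s)) :=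
      mul_nonneg hωnn (div_nonneg (Real.rpow_nonneg hr.le _) ha.le)
    have h1q : 1 ≤ qg / pg := (one_le_div hpg0).2 hpq
    calc (∫ y in ball x' r,
          g (ε * ‖y - x'‖ ^ β / ‖y - x'‖ ^ s) * K x' y / ‖y - x'‖ ^ s)
        ≤ ∫ y in ball x' r, g 1 * Lam * ε * ‖y - x'‖ ^ c := hint
      _ = g 1 * Lam * ε * (ω * (r ^ ((β - s) * pg - s) / ((β - s) * pg - s))) := hval2
      _ ≤ (qg / pg) * (g 1 * Lam * ε * (ω * (r ^ ((β - s) * pg - s) / ((β - s) * pg - s)))) := by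
          apply le_mul_of_one_le_left _ h1q
          exact mul_nonneg (mul_nonneg (mul_nonneg hg1.le hLam.le) hε.le) hX
      _ = g 1 * Lam * qg / pg * ε * r ^ ((β - s) * pg - s) / ((β - s) * pg - s) * ω := by
          ring
  refine ⟨main, ?_⟩
  intro r hr hr1
  refine tendsto_of_tendsto_of_tendsto_of_le_of_le' (g := fun _ : ℝ => (0:ℝ))
    (h := fun ε : ℝ => g 1 * Lam * qg / pg * ε * r ^ ((β - s) * pg - s) / ((β - s) * pg - s) * ω)
    tendsto_const_nhds ?_ ?_ ?_
  · have hcont2 : Continuous (fun ε : ℝ =>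
        g 1 * Lam * qg / pg * ε * r ^ ((β - s) * pg - s) / ((β - s) * pg - s) * ω) := by
      fun_prop
    have h0 : (fun ε : ℝ =>
        g 1 * Lam * qg / pg * ε * r ^ ((β - s) * pg - s) / ((β - s) * pg - s) * ω) 0 = 0 := by
      simp
    have htd := hcont2.tendsto 0
    have h0' : g 1 * Lam * qg / pg * 0 * r ^ ((β - s) * pg - s) / ((β - s) * pg - s) * ω = 0 := by
      ring
    rw [h0'] at htd
    exact htd.mono_left nhdsWithin_le_nhds
  · filter_upwards [self_mem_nhdsWithin] with ε hε
    exact setIntegral_nonneg measurableSet_ball (fun y _ => hFnn ε hε y)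
  · filter_upwards [Ioo_mem_nhdsGT_of_mem (by constructor <;> norm_num : (0:ℝ) ∈ Ico (0:ℝ) 1)]
      with ε hε
    exact main ε r hε.1 hε.2 hr hr1
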